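/- Let (T, A)_ω be a DL-Lite_core weighted knowledge base, k an integer, and A a concept name. Let Ā be a fresh concept name, r, s fresh role names, A₀ a fresh concept name, and a a fresh individual name. Let T' = T ∪ {A₀ ⊑ ∃s, ∃s^- ⊑ A, A ⊑ ∃r, ∃r^- ⊑ Ā} and A' = A ∪ {A₀(a)}, and let ω' extend ω by assigning weight ∞ to A₀ ⊑ ∃s, ∃s^- ⊑ A, A ⊑ ∃r and A₀(a), and weight 1 to ∃r^- ⊑ Ā. Then (T, A)_ω ⊨_p^k ∃y A(y) if and only if (T', A')_{ω'} ⊭_c^{k+1} ∃y Ā(y). -/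

import Mathlib

namespace DL

/-! ### Syntax -/

abbrev IndName := ℕ
abbrev CName := ℕ
abbrev RName := ℕ

/-- Roles: role names and inverse roles. -/
inductive Role where
  | name : RName → Role
  | inv  : RName → Role
deriving DecidableEq

/-- `ALCHIO` concepts. -/
inductive Concept where
  | top  : Concept
  | bot  : Concept
  | atom : CName → Concept
  | nom  : IndName → Concept
  | neg  : Concept → Concept
  | conj : Concept → Concept → Concept
  | ex   : Role → Concept → Concept
deriving DecidableEq

/-- TBox axioms: concept inclusions and role inclusions. -/
inductive Axiom where
  | ci : Concept → Concept → Axiom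
  | ri : Role → Role → Axiom
deriving DecidableEq

/-- ABox assertions. -/
inductive Assertion where
  | ca : CName → IndName → Assertion
  | ra : RName → IndName → IndName → Assertion
deriving DecidableEq

/-! ### Interpretations -/

/-- A DL interpretation with domain a subset of a universe `U`.  Individual names are
interpreted via `indI` (under the standard names assumption, the individual names of the
ABox under consideration are interpreted "as themselves", i.e. injectively). -/
structure Interp (U : Type) where
  dom : Set U
  indI : IndName → U
  cI : CName → Set U
  rI : RName → Set (U × U)
  cI_sub : ∀ A, cI A ⊆ dom
  rI_sub : ∀ r p, p ∈ rI r → p.1 ∈ dom ∧ p.2 ∈ dom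

variable {U : Type}

/-- Every individual name denotes an element of the domain. -/
def Interp.Proper (I : Interp U) : Prop := ∀ a, I.indI a ∈ I.dom

def Role.interp (I : Interp U) : Role → Set (U × U)
  | Role.name r => I.rI r
  | Role.inv r  => {p | (p.2, p.1) ∈ I.rI r}

def Concept.interp (I : Interp U) : Concept → Set U
  | Concept.top => I.dom
  | Concept.bot => ∅
  | Concept.atom A => I.cI A
  | Concept.nom a => {I.indI a} ∩ I.dom
  | Concept.neg C => I.dom \ Concept.interp I C
  | Concept.conj C D => Concept.interp I C ∩ Concept.interp I D
  | Concept.ex r C => {d | ∃ e, (d, e) ∈ Role.interp I r ∧ e ∈ Concept.interp I C}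

def Assertion.sat (I : Interp U) : Assertion → Prop
  | Assertion.ca A a => I.indI a ∈ I.cI A
  | Assertion.ra r a b => (I.indI a, I.indI b) ∈ I.rI r

/-! ### Violations and cost -/

/-- Violations of a concept inclusion `C ⊑ D`. -/
def vioCI (I : Interp U) (C D : Concept) : Set U :=
  Concept.interp I C \ Concept.interp I D

/-- Violations of a role inclusion `r ⊑ s`. -/
def vioRI (I : Interp U) (r s : Role) : Set (U × U) :=
  Role.interp I r \ Role.interp I s

/-- The number of violations of an axiom. -/
noncomputable def Axiom.vioCount (I : Interp U) : Axiom → ℕ∞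
  | Axiom.ci C D => (vioCI I C D).encard
  | Axiom.ri r s => (vioRI I r s).encard

open Classical in
/-- The cost of an interpretation w.r.t. a weighted knowledge base `(T, A)` with weight
functions `wT` (on TBox axioms) and `wA` (on ABox assertions). -/
noncomputable def cost (T : Finset Axiom) (A : Finset Assertion)
    (wT : Axiom → ℕ∞) (wA : Assertion → ℕ∞) (I : Interp U) : ℕ∞ :=
  (∑ τ ∈ T, wT τ * Axiom.vioCount I τ) +
    ∑ α ∈ A, (if Assertion.sat I α then 0 else wA α)

/-! ### Queries -/

inductive Term where
  | var : ℕ → Term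
  | ind : IndName → Term
deriving DecidableEq

inductive QAtom where
  | ca : CName → Term → QAtom
  | ra : RName → Term → Term → QAtom
deriving DecidableEq

/-- A Boolean conjunctive query: a finite set of atoms, all of whose variables are
(implicitly) existentially quantified. -/
abbrev BCQ := Finset QAtom

def Term.eval (I : Interp U) (π : ℕ → U) : Term → U
  | Term.var v => π v
  | Term.ind a => I.indI a

def QAtom.sat (I : Interp U) (π : ℕ → U) : QAtom → Prop
  | QAtom.ca A t => Term.eval I π t ∈ I.cI A
  | QAtom.ra r t t' => (Term.eval I π t, Term.eval I π t') ∈ I.rI r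

/-- Satisfaction of a BCQ in an interpretation. -/
def satQ (I : Interp U) (q : BCQ) : Prop :=
  ∃ π : ℕ → U, (∀ v, π v ∈ I.dom) ∧ ∀ a ∈ q, QAtom.sat I π a

/-- An instance query is a BCQ with a single atom. -/
def IsIQ (q : BCQ) : Prop := ∃ a : QAtom, q = {a}

/-! ### Cost-based semantics -/

/-- `k`-satisfiability: some interpretation has cost at most `k`. -/
def ksat (T : Finset Axiom) (A : Finset Assertion)
    (wT : Axiom → ℕ∞) (wA : Assertion → ℕ∞) (k : ℕ) : Prop :=
  ∃ (U : Type) (I : Interp U), I.Proper ∧ cost T A wT wA I ≤ (k : ℕ∞)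

/-- `K ⊨ₚᵏ q`: some interpretation of cost at most `k` satisfies `q`. -/
def satP (T : Finset Axiom) (A : Finset Assertion)
    (wT : Axiom → ℕ∞) (wA : Assertion → ℕ∞) (k : ℕ) (q : BCQ) : Prop :=
  ∃ (U : Type) (I : Interp U), I.Proper ∧ cost T A wT wA I ≤ (k : ℕ∞) ∧ satQ I q

/-- `K ⊨꜀ᵏ q`: every interpretation of cost at most `k` satisfies `q`. -/
def satC (T : Finset Axiom) (A : Finset Assertion)
    (wT : Axiom → ℕ∞) (wA : Assertion → ℕ∞) (k : ℕ) (q : BCQ) : Prop :=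
  ∀ (U : Type) (I : Interp U), I.Proper → cost T A wT wA I ≤ (k : ℕ∞) → satQ I q

/-- The optimal cost of a weighted knowledge base. -/
noncomputable def optCost (T : Finset Axiom) (A : Finset Assertion)
    (wT : Axiom → ℕ∞) (wA : Assertion → ℕ∞) : ℕ∞ :=
  sInf {c : ℕ∞ | ∃ (U : Type) (I : Interp U), I.Proper ∧ cost T A wT wA I = c}

/-- `K ⊨ₚᵒᵖᵗ q`: some interpretation of optimal cost satisfies `q`. -/
noncomputable def satPopt (T : Finset Axiom) (A : Finset Assertion)
    (wT : Axiom → ℕ∞) (wA : Assertion → ℕ∞) (q : BCQ) : Prop :=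
  ∃ (U : Type) (I : Interp U), I.Proper ∧ cost T A wT wA I = optCost T A wT wA ∧ satQ I q

/-- `K ⊨꜀ᵒᵖᵗ q`: every interpretation of optimal cost satisfies `q`. -/
noncomputable def satCopt (T : Finset Axiom) (A : Finset Assertion)
    (wT : Axiom → ℕ∞) (wA : Assertion → ℕ∞) (q : BCQ) : Prop :=
  ∀ (U : Type) (I : Interp U), I.Proper → cost T A wT wA I = optCost T A wT wA → satQ I q

/-! ### Occurrences of symbols -/

def Role.base : Role → RName
  | Role.name r => r
  | Role.inv r => r

def Concept.cnames : Concept → Finset CName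
  | Concept.atom A => {A}
  | Concept.neg C => C.cnames
  | Concept.conj C D => C.cnames ∪ D.cnames
  | Concept.ex _ C => C.cnames
  | _ => ∅

def Concept.rnames : Concept → Finset RName
  | Concept.neg C => C.rnames
  | Concept.conj C D => C.rnames ∪ D.rnames
  | Concept.ex r C => insert r.base C.rnames
  | _ => ∅

def Concept.indNames : Concept → Finset IndName
  | Concept.nom a => {a}
  | Concept.neg C => C.indNames
  | Concept.conj C D => C.indNames ∪ D.indNames
  | Concept.ex _ C => C.indNames
  | _ => ∅

def Axiom.cnames : Axiom → Finset CName
  | Axiom.ci C D => C.cnames ∪ D.cnames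
  | Axiom.ri _ _ => ∅

def Axiom.rnames : Axiom → Finset RName
  | Axiom.ci C D => C.rnames ∪ D.rnames
  | Axiom.ri r s => {r.base, s.base}

def Axiom.indNames : Axiom → Finset IndName
  | Axiom.ci C D => C.indNames ∪ D.indNames
  | Axiom.ri _ _ => ∅

def Assertion.cnames : Assertion → Finset CName
  | Assertion.ca A _ => {A}
  | Assertion.ra _ _ _ => ∅

def Assertion.rnames : Assertion → Finset RName
  | Assertion.ca _ _ => ∅
  | Assertion.ra r _ _ => {r}

def Assertion.indNames : Assertion → Finset IndName
  | Assertion.ca _ a => {a}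
  | Assertion.ra _ a b => {a, b}

/-- The individual names occurring in an ABox. -/
def aboxInds (A : Finset Assertion) : Finset IndName := A.biUnion Assertion.indNames

/-- The individual names occurring in a KB. -/
def kbInds (T : Finset Axiom) (A : Finset Assertion) : Finset IndName :=
  T.biUnion Axiom.indNames ∪ aboxInds A

def Term.indNames : Term → Finset IndName
  | Term.var _ => ∅
  | Term.ind a => {a}

def QAtom.indNames : QAtom → Finset IndName
  | QAtom.ca _ t => t.indNames
  | QAtom.ra _ t t' => t.indNames ∪ t'.indNames

def QAtom.cnames : QAtom → Finset CName
  | QAtom.ca A _ => {A}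
  | QAtom.ra _ _ _ => ∅

def qInds (q : BCQ) : Finset IndName := q.biUnion QAtom.indNames

def qCnames (q : BCQ) : Finset CName := q.biUnion QAtom.cnames

/-! ### Sizes -/

def Concept.size : Concept → ℕ
  | Concept.top => 1
  | Concept.bot => 1
  | Concept.atom _ => 1
  | Concept.nom _ => 1
  | Concept.neg C => C.size + 1
  | Concept.conj C D => C.size + D.size + 1
  | Concept.ex _ C => C.size + 2

def Axiom.size : Axiom → ℕ
  | Axiom.ci C D => C.size + D.size + 1
  | Axiom.ri _ _ => 3

def Assertion.size : Assertion → ℕ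
  | Assertion.ca _ _ => 2
  | Assertion.ra _ _ _ => 3

def tboxSize (T : Finset Axiom) : ℕ := ∑ τ ∈ T, τ.size

def aboxSize (A : Finset Assertion) : ℕ := ∑ α ∈ A, α.size

/-! ### DL-Lite fragments -/

/-- Basic concepts: concept names and unqualified existential restrictions `∃r` (with a
possibly inverse role `r`), the latter rendered as `∃r.⊤`. -/
inductive IsBasic : Concept → Prop
  | atom (A : CName) : IsBasic (Concept.atom A)
  | ex (r : Role) : IsBasic (Concept.ex r Concept.top)

/-- A `DL-Lite_core` axiom: `B ⊑ C` or `B ⊓ C ⊑ ⊥` with `B, C` basic concepts. -/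
def IsCoreAxiom (τ : Axiom) : Prop :=
  (∃ B C, τ = Axiom.ci B C ∧ IsBasic B ∧ IsBasic C) ∨
  (∃ B C, τ = Axiom.ci (Concept.conj B C) Concept.bot ∧ IsBasic B ∧ IsBasic C)

def IsDLLiteCore (T : Finset Axiom) : Prop := ∀ τ ∈ T, IsCoreAxiom τ

/-- Concepts built from basic concepts using `¬`, `⊓` (and hence also `⊔`). -/
inductive IsBoolConcept : Concept → Prop
  | basic {C} : IsBasic C → IsBoolConcept C
  | neg {C} : IsBoolConcept C → IsBoolConcept (Concept.neg C)
  | conj {C D} : IsBoolConcept C → IsBoolConcept D → IsBoolConcept (Concept.conj C D)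

/-- A `DL-Lite_bool^H` axiom: a concept inclusion between Boolean combinations of basic
concepts, or a role inclusion. -/
def IsBoolHAxiom (τ : Axiom) : Prop :=
  (∃ C D, τ = Axiom.ci C D ∧ IsBoolConcept C ∧ IsBoolConcept D) ∨ (∃ r s, τ = Axiom.ri r s)

def IsDLLiteBoolH (T : Finset Axiom) : Prop := ∀ τ ∈ T, IsBoolHAxiom τ

/-! ### Auxiliary lemmas for Statement 8 -/

lemma satQ_single_ca {U : Type} (I : Interp U) (C : CName) :
    satQ I {QAtom.ca C (Term.var 0)} ↔ (I.cI C).Nonempty := by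
  constructor
  · rintro ⟨π, hπ, hsat⟩
    exact ⟨π 0, hsat _ (Finset.mem_singleton_self _)⟩
  · rintro ⟨d, hd⟩
    refine ⟨fun _ => d, fun _ => I.cI_sub C hd, ?_⟩
    intro b hb
    rw [Finset.mem_singleton] at hb
    subst hb
    exact hd

lemma Role.interp_congr {U : Type} {I J : Interp U} (ρ : Role)
    (h : I.rI ρ.base = J.rI ρ.base) : ρ.interp I = ρ.interp J := by
  cases ρ with
  | name r => simpa [Role.interp, Role.base] using h
  | inv r => simp only [Role.base] at h; simp [Role.interp, h]

lemma Concept.interp_congr {U : Type} {I J : Interp U} (hdom : I.dom = J.dom) (C : Concept)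
    (hc : ∀ B ∈ C.cnames, I.cI B = J.cI B)
    (hr : ∀ ρ ∈ C.rnames, I.rI ρ = J.rI ρ)
    (hi : ∀ b ∈ C.indNames, I.indI b = J.indI b) :
    C.interp I = C.interp J := by
  induction C with
  | top => simpa [Concept.interp] using hdom
  | bot => simp [Concept.interp]
  | atom B => exact hc B (by simp [Concept.cnames])
  | nom b => simp [Concept.interp, hdom, hi b (by simp [Concept.indNames])]
  | neg C ih =>
      simp only [Concept.interp, hdom,
        ih (fun B hB => hc B hB) (fun ρ hρ => hr ρ hρ) (fun b hb => hi b hb)]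
  | conj C D ihC ihD =>
      simp only [Concept.interp]
      rw [ihC (fun B hB => hc B (by simp [Concept.cnames, hB]))
            (fun ρ hρ => hr ρ (by simp [Concept.rnames, hρ]))
            (fun b hb => hi b (by simp [Concept.indNames, hb])),
          ihD (fun B hB => hc B (by simp [Concept.cnames, hB]))
            (fun ρ hρ => hr ρ (by simp [Concept.rnames, hρ]))
            (fun b hb => hi b (by simp [Concept.indNames, hb]))]
  | ex ρ C ih =>
      simp only [Concept.interp]
      rw [Role.interp_congr ρ (hr ρ.base (by simp [Concept.rnames])),
          ih (fun B hB => hc B (by simp [Concept.cnames, hB]))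
            (fun ρ' hρ' => hr ρ' (by simp [Concept.rnames, hρ']))
            (fun b hb => hi b (by simp [Concept.indNames, hb]))]

lemma Axiom.vioCount_congr {U : Type} {I J : Interp U} (hdom : I.dom = J.dom) (τ : Axiom)
    (hc : ∀ B ∈ τ.cnames, I.cI B = J.cI B)
    (hr : ∀ ρ ∈ τ.rnames, I.rI ρ = J.rI ρ)
    (hi : ∀ b ∈ τ.indNames, I.indI b = J.indI b) :
    τ.vioCount I = τ.vioCount J := by
  cases τ with
  | ci C D =>
      simp only [Axiom.vioCount, vioCI]
      rw [Concept.interp_congr hdom C (fun B hB => hc B (by simp [Axiom.cnames, hB]))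
            (fun ρ hρ => hr ρ (by simp [Axiom.rnames, hρ]))
            (fun b hb => hi b (by simp [Axiom.indNames, hb])),
          Concept.interp_congr hdom D (fun B hB => hc B (by simp [Axiom.cnames, hB]))
            (fun ρ hρ => hr ρ (by simp [Axiom.rnames, hρ]))
            (fun b hb => hi b (by simp [Axiom.indNames, hb]))]
  | ri ρ σ =>
      simp only [Axiom.vioCount, vioRI]
      rw [Role.interp_congr ρ (hr ρ.base (by simp [Axiom.rnames])),
          Role.interp_congr σ (hr σ.base (by simp [Axiom.rnames]))]

lemma Assertion.sat_congr {U : Type} {I J : Interp U} (α : Assertion)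
    (hc : ∀ B ∈ α.cnames, I.cI B = J.cI B)
    (hr : ∀ ρ ∈ α.rnames, I.rI ρ = J.rI ρ)
    (hi : ∀ b ∈ α.indNames, I.indI b = J.indI b) :
    (α.sat I ↔ α.sat J) := by
  cases α with
  | ca B b =>
      simp only [Assertion.sat]
      rw [hc B (by simp [Assertion.cnames]), hi b (by simp [Assertion.indNames])]
  | ra ρ b c =>
      simp only [Assertion.sat]
      rw [hr ρ (by simp [Assertion.rnames]), hi b (by simp [Assertion.indNames]),
          hi c (by simp [Assertion.indNames])]

/-- The interpretation used in the forward direction of Statement 8. -/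
def fwdInterp {U : Type} (I : Interp U) (Xb X0 : CName) (r s : RName) (a : IndName)
    (X : CName) (d : U) (hd : d ∈ I.cI X) : Interp U where
  dom := I.dom
  indI b := if b = a then d else I.indI b
  cI B := if B = Xb then ∅ else if B = X0 then {d} else I.cI B
  rI ρ := if ρ = s then {(d, d)} else if ρ = r then {p | p.1 ∈ I.cI X ∧ p.2 = d} else I.rI ρ
  cI_sub := by
    intro B x hx
    split_ifs at hx with h1 h2
    · exact absurd hx (Set.notMem_empty x)
    · rw [Set.mem_singleton_iff] at hx
      subst hx
      exact I.cI_sub X hd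
    · exact I.cI_sub B hx
  rI_sub := by
    intro ρ p hp
    split_ifs at hp with h1 h2
    · rw [Set.mem_singleton_iff] at hp
      rw [hp]
      exact ⟨I.cI_sub X hd, I.cI_sub X hd⟩
    · obtain ⟨ha1, ha2⟩ := hp
      exact ⟨I.cI_sub X ha1, ha2 ▸ I.cI_sub X hd⟩
    · exact I.rI_sub ρ p hp

/-- (Reduction of `IQAₚᵏ` to the complement of `IQA꜀ᵏ⁺¹`, existential
concept query `∃y X(y)`.)  With fresh concept names `Xb` (`= Ā`), `X0` (`= A₀`), fresh
role names `r, s`, a fresh individual name `a`,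
`T' = T ∪ {X0 ⊑ ∃s, ∃s⁻ ⊑ X, X ⊑ ∃r, ∃r⁻ ⊑ Xb}`, `A' = A ∪ {X0(a)}`, weight `∞` on the
first three new axioms and on `X0(a)`, and weight `1` on `∃r⁻ ⊑ Xb`:
`(T,A)_ω ⊨ₚᵏ ∃y X(y)` iff `(T',A')_{ω'} ⊭꜀ᵏ⁺¹ ∃y Xb(y)`. -/
theorem statement8 (T : Finset Axiom) (hcore : IsDLLiteCore T)
    (A : Finset Assertion) (wT : Axiom → ℕ∞) (wA : Assertion → ℕ∞)
    (hwT : ∀ τ ∈ T, 1 ≤ wT τ) (hwA : ∀ α ∈ A, 1 ≤ wA α)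
    (k : ℕ) (X : CName)
    (Xb X0 : CName) (r s : RName) (a : IndName)
    (hXb : Xb ≠ X) (hX0 : X0 ≠ X) (hXbX0 : Xb ≠ X0) (hrs : r ≠ s)
    (hXbT : ∀ τ ∈ T, Xb ∉ Axiom.cnames τ) (hXbA : ∀ α ∈ A, Xb ∉ Assertion.cnames α)
    (hX0T : ∀ τ ∈ T, X0 ∉ Axiom.cnames τ) (hX0A : ∀ α ∈ A, X0 ∉ Assertion.cnames α)
    (hrT : ∀ τ ∈ T, r ∉ Axiom.rnames τ) (hrA : ∀ α ∈ A, r ∉ Assertion.rnames α)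
    (hsT : ∀ τ ∈ T, s ∉ Axiom.rnames τ) (hsA : ∀ α ∈ A, s ∉ Assertion.rnames α)
    (haT : ∀ τ ∈ T, a ∉ Axiom.indNames τ) (haA : ∀ α ∈ A, a ∉ Assertion.indNames α) :
    satP T A wT wA k {QAtom.ca X (Term.var 0)} ↔
      ¬ satC
          (insert (Axiom.ci (Concept.atom X0) (Concept.ex (Role.name s) Concept.top))
            (insert (Axiom.ci (Concept.ex (Role.inv s) Concept.top) (Concept.atom X))
              (insert (Axiom.ci (Concept.atom X) (Concept.ex (Role.name r) Concept.top))
                (insert (Axiom.ci (Concept.ex (Role.inv r) Concept.top) (Concept.atom Xb)) T))))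
          (insert (Assertion.ca X0 a) A)
          (fun τ =>
            if τ = Axiom.ci (Concept.ex (Role.inv r) Concept.top) (Concept.atom Xb) then 1
            else if τ = Axiom.ci (Concept.atom X0) (Concept.ex (Role.name s) Concept.top) ∨
                τ = Axiom.ci (Concept.ex (Role.inv s) Concept.top) (Concept.atom X) ∨
                τ = Axiom.ci (Concept.atom X) (Concept.ex (Role.name r) Concept.top) then ⊤
            else wT τ)
          (fun α => if α = Assertion.ca X0 a then ⊤ else wA α)
          (k + 1) {QAtom.ca Xb (Term.var 0)} := by
  classical
  set ax1 := Axiom.ci (Concept.atom X0) (Concept.ex (Role.name s) Concept.top) with hax1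
  set ax2 := Axiom.ci (Concept.ex (Role.inv s) Concept.top) (Concept.atom X) with hax2
  set ax3 := Axiom.ci (Concept.atom X) (Concept.ex (Role.name r) Concept.top) with hax3
  set ax4 := Axiom.ci (Concept.ex (Role.inv r) Concept.top) (Concept.atom Xb) with hax4
  have h12 : ax1 ≠ ax2 := by simp [hax1, hax2]
  have h13 : ax1 ≠ ax3 := by simp [hax1, hax3, hX0]
  have h14 : ax1 ≠ ax4 := by simp [hax1, hax4]
  have h23 : ax2 ≠ ax3 := by simp [hax2, hax3]
  have h24 : ax2 ≠ ax4 := by simp [hax2, hax4, Ne.symm hrs]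
  have h34 : ax3 ≠ ax4 := by simp [hax3, hax4]
  have h1T : ax1 ∉ T := fun h => hX0T ax1 h (by simp [hax1, Axiom.cnames, Concept.cnames])
  have h2T : ax2 ∉ T := fun h => hsT ax2 h
    (by simp [hax2, Axiom.rnames, Concept.rnames, Role.base])
  have h3T : ax3 ∉ T := fun h => hrT ax3 h
    (by simp [hax3, Axiom.rnames, Concept.rnames, Role.base])
  have h4T : ax4 ∉ T := fun h => hrT ax4 h
    (by simp [hax4, Axiom.rnames, Concept.rnames, Role.base])
  have hne1 : ∀ τ ∈ T, τ ≠ ax1 := fun τ hτ h => h1T (h ▸ hτ)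
  have hne2 : ∀ τ ∈ T, τ ≠ ax2 := fun τ hτ h => h2T (h ▸ hτ)
  have hne3 : ∀ τ ∈ T, τ ≠ ax3 := fun τ hτ h => h3T (h ▸ hτ)
  have hne4 : ∀ τ ∈ T, τ ≠ ax4 := fun τ hτ h => h4T (h ▸ hτ)
  have hX0aA : Assertion.ca X0 a ∉ A := fun h => hX0A _ h (by simp [Assertion.cnames])
  have hneA : ∀ α ∈ A, α ≠ Assertion.ca X0 a := fun α hα h => hX0aA (h ▸ hα)
  have m1 : ax1 ∉ insert ax2 (insert ax3 (insert ax4 T)) := by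
    simp [h12, h13, h14, h1T]
  have m2 : ax2 ∉ insert ax3 (insert ax4 T) := by simp [h23, h24, h2T]
  have m3 : ax3 ∉ insert ax4 T := by simp [h34, h3T]
  have hKne : ((k + 1 : ℕ) : ℕ∞) ≠ ⊤ := ENat.coe_ne_top _
  constructor
  · rintro ⟨U, I, hProper, hcost, hq⟩
    rw [satQ_single_ca] at hq
    obtain ⟨d, hdX⟩ := hq
    have hddom : d ∈ I.dom := I.cI_sub X hdX
    intro hC
    set I' : Interp U := fwdInterp I Xb X0 r s a X d hdX with hI'
    have hcXb : I'.cI Xb = ∅ := by simp [hI', fwdInterp]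
    have hcX0 : I'.cI X0 = {d} := by simp [hI', fwdInterp, Ne.symm hXbX0]
    have hcX : I'.cI X = I.cI X := by simp [hI', fwdInterp, Ne.symm hXb, Ne.symm hX0]
    have hrsI : I'.rI s = {(d, d)} := by simp [hI', fwdInterp]
    have hrrI : I'.rI r = {p : U × U | p.1 ∈ I.cI X ∧ p.2 = d} := by
      simp [hI', fwdInterp, hrs]
    have hdomI : I'.dom = I.dom := rfl
    have hindIa : I'.indI a = d := by simp [hI', fwdInterp]
    have hProper' : I'.Proper := by
      intro b
      by_cases hb : b = a
      · show I'.indI b ∈ I'.dom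
        simp [hI', fwdInterp, hb, hddom]
      · show I'.indI b ∈ I'.dom
        simp only [hI', fwdInterp, if_neg hb]
        exact hProper b
    -- violation counts of the new axioms
    have hvc1 : Axiom.vioCount I' ax1 = 0 := by
      rw [hax1]
      simp only [Axiom.vioCount, Set.encard_eq_zero, vioCI, Set.diff_eq_empty]
      intro x hx
      simp only [Concept.interp, hcX0, Set.mem_singleton_iff] at hx
      simp only [Concept.interp, Role.interp, hrsI, Set.mem_setOf_eq]
      exact ⟨d, by simp [hx], hddom⟩
    have hvc2 : Axiom.vioCount I' ax2 = 0 := by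
      rw [hax2]
      simp only [Axiom.vioCount, Set.encard_eq_zero, vioCI, Set.diff_eq_empty]
      intro x hx
      simp only [Concept.interp, Role.interp, hrsI, Set.mem_setOf_eq,
        Set.mem_singleton_iff, Prod.ext_iff] at hx
      obtain ⟨e, ⟨he1, he2⟩, -⟩ := hx
      simp only [Concept.interp, hcX]
      rw [he2]
      exact hdX
    have hvc3 : Axiom.vioCount I' ax3 = 0 := by
      rw [hax3]
      simp only [Axiom.vioCount, Set.encard_eq_zero, vioCI, Set.diff_eq_empty]
      intro x hx
      simp only [Concept.interp, hcX] at hx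
      simp only [Concept.interp, Role.interp, hrrI, Set.mem_setOf_eq]
      exact ⟨d, ⟨hx, rfl⟩, hddom⟩
    have hvc4 : Axiom.vioCount I' ax4 = 1 := by
      rw [hax4]
      simp only [Axiom.vioCount, vioCI]
      have : Concept.interp I' (Concept.ex (Role.inv r) Concept.top) \
          Concept.interp I' (Concept.atom Xb) = {d} := by
        ext x
        simp only [Concept.interp, Role.interp, hrrI, hcXb, Set.mem_diff,
          Set.mem_setOf_eq, Set.mem_empty_iff_false, not_false_iff, and_true,
          Set.mem_singleton_iff]
        constructor
        · rintro ⟨e, ⟨-, he2⟩, -⟩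
          exact he2
        · intro hx
          exact ⟨d, ⟨hdX, hx⟩, hddom⟩
      rw [this, Set.encard_singleton]
    have hTvio : ∀ τ ∈ T, Axiom.vioCount I' τ = Axiom.vioCount I τ := by
      intro τ hτ
      refine Axiom.vioCount_congr (I := I') (J := I) rfl τ ?_ ?_ ?_
      · intro B hB
        have hBXb : B ≠ Xb := fun h => hXbT τ hτ (h ▸ hB)
        have hBX0 : B ≠ X0 := fun h => hX0T τ hτ (h ▸ hB)
        simp [hI', fwdInterp, hBXb, hBX0]
      · intro ρ hρ
        have hρs : ρ ≠ s := fun h => hsT τ hτ (h ▸ hρ)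
        have hρr : ρ ≠ r := fun h => hrT τ hτ (h ▸ hρ)
        simp [hI', fwdInterp, hρs, hρr]
      · intro b hb
        have hba : b ≠ a := fun h => haT τ hτ (h ▸ hb)
        simp [hI', fwdInterp, hba]
    have hAsat : ∀ α ∈ A, (Assertion.sat I' α ↔ Assertion.sat I α) := by
      intro α hα
      refine Assertion.sat_congr (I := I') (J := I) α ?_ ?_ ?_
      · intro B hB
        have hBXb : B ≠ Xb := fun h => hXbA α hα (h ▸ hB)
        have hBX0 : B ≠ X0 := fun h => hX0A α hα (h ▸ hB)
        simp [hI', fwdInterp, hBXb, hBX0]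
      · intro ρ hρ
        have hρs : ρ ≠ s := fun h => hsA α hα (h ▸ hρ)
        have hρr : ρ ≠ r := fun h => hrA α hα (h ▸ hρ)
        simp [hI', fwdInterp, hρs, hρr]
      · intro b hb
        have hba : b ≠ a := fun h => haA α hα (h ▸ hb)
        simp [hI', fwdInterp, hba]
    have hsat0 : Assertion.sat I' (Assertion.ca X0 a) := by
      show I'.indI a ∈ I'.cI X0
      rw [hindIa, hcX0]
      exact rfl
    have hcost' : cost (insert ax1 (insert ax2 (insert ax3 (insert ax4 T))))
        (insert (Assertion.ca X0 a) A)
        (fun τ => if τ = ax4 then 1 else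
          if τ = ax1 ∨ τ = ax2 ∨ τ = ax3 then ⊤ else wT τ)
        (fun α => if α = Assertion.ca X0 a then ⊤ else wA α) I' ≤ ((k + 1 : ℕ) : ℕ∞) := by
      rw [cost, Finset.sum_insert m1, Finset.sum_insert m2, Finset.sum_insert m3,
        Finset.sum_insert h4T, Finset.sum_insert hX0aA]
      rw [hvc1, hvc2, hvc3, hvc4, if_pos hsat0]
      simp only [mul_zero, mul_one, zero_add, eq_self_iff_true, if_true]
      have hTsum : ∑ τ ∈ T, (if τ = ax4 then (1 : ℕ∞) else
          if τ = ax1 ∨ τ = ax2 ∨ τ = ax3 then ⊤ else wT τ) * Axiom.vioCount I' τ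
          = ∑ τ ∈ T, wT τ * Axiom.vioCount I τ := by
        refine Finset.sum_congr rfl fun τ hτ => ?_
        rw [if_neg (hne4 τ hτ), if_neg (by
          push_neg
          exact ⟨hne1 τ hτ, hne2 τ hτ, hne3 τ hτ⟩), hTvio τ hτ]
      have hAsum : ∑ α ∈ A, (if Assertion.sat I' α then 0 else
          if α = Assertion.ca X0 a then ⊤ else wA α)
          = ∑ α ∈ A, (if Assertion.sat I α then 0 else wA α) := by
        refine Finset.sum_congr rfl fun α hα => ?_
        rw [if_neg (hneA α hα)]
        by_cases h : Assertion.sat I α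
        · rw [if_pos h, if_pos ((hAsat α hα).mpr h)]
        · rw [if_neg h, if_neg (fun h' => h ((hAsat α hα).mp h'))]
      rw [hTsum, hAsum]
      rw [cost] at hcost
      calc 1 + ∑ τ ∈ T, wT τ * Axiom.vioCount I τ +
            ∑ α ∈ A, (if Assertion.sat I α then 0 else wA α)
          = 1 + (∑ τ ∈ T, wT τ * Axiom.vioCount I τ +
            ∑ α ∈ A, (if Assertion.sat I α then 0 else wA α)) := by rw [add_assoc]
        _ ≤ 1 + (k : ℕ∞) := by exact add_le_add (le_refl 1) hcost
        _ = ((k + 1 : ℕ) : ℕ∞) := by push_cast; rw [add_comm]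
    have := hC U I' hProper' hcost'
    rw [satQ_single_ca, hcXb] at this
    exact Set.not_nonempty_empty this
  · intro h
    unfold satC at h
    push_neg at h
    obtain ⟨U, I', hProper, hcost, hnq⟩ := h
    have hXbE : I'.cI Xb = ∅ := by
      rw [satQ_single_ca] at hnq
      exact Set.not_nonempty_iff_eq_empty.mp hnq
    rw [cost, Finset.sum_insert m1, Finset.sum_insert m2, Finset.sum_insert m3,
      Finset.sum_insert h4T, Finset.sum_insert hX0aA] at hcost
    simp only [h12, h13, h14, h23, h24, h34, if_false, eq_self_iff_true, if_true,
      true_or, or_true, or_false, false_or, one_mul] at hcost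
    -- extract that the ⊤-weighted axioms have no violations
    have hb1 : (⊤ : ℕ∞) * Axiom.vioCount I' ax1 ≤ ((k + 1 : ℕ) : ℕ∞) :=
      le_trans (le_self_add.trans le_self_add) hcost
    have hb2 : (⊤ : ℕ∞) * Axiom.vioCount I' ax2 ≤ ((k + 1 : ℕ) : ℕ∞) :=
      le_trans ((le_self_add.trans le_add_self).trans le_self_add) hcost
    have hb3 : (⊤ : ℕ∞) * Axiom.vioCount I' ax3 ≤ ((k + 1 : ℕ) : ℕ∞) :=
      le_trans (((le_self_add.trans le_add_self).trans le_add_self).trans le_self_add) hcost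
    have hbc : (if Assertion.sat I' (Assertion.ca X0 a) then (0:ℕ∞) else ⊤)
        ≤ ((k + 1 : ℕ) : ℕ∞) := le_trans (le_self_add.trans le_add_self) hcost
    have hv1 : Axiom.vioCount I' ax1 = 0 := by
      by_contra hne
      rw [ENat.top_mul hne] at hb1
      exact hKne (top_le_iff.mp hb1)
    have hv2 : Axiom.vioCount I' ax2 = 0 := by
      by_contra hne
      rw [ENat.top_mul hne] at hb2
      exact hKne (top_le_iff.mp hb2)
    have hv3 : Axiom.vioCount I' ax3 = 0 := by
      by_contra hne
      rw [ENat.top_mul hne] at hb3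
      exact hKne (top_le_iff.mp hb3)
    have hsat0 : Assertion.sat I' (Assertion.ca X0 a) := by
      by_contra hne
      rw [if_neg hne] at hbc
      exact hKne (top_le_iff.mp hbc)
    -- element chase
    have hsub1 : Concept.interp I' (Concept.atom X0) ⊆
        Concept.interp I' (Concept.ex (Role.name s) Concept.top) := by
      rw [hax1] at hv1
      simp only [Axiom.vioCount, Set.encard_eq_zero, vioCI, Set.diff_eq_empty] at hv1
      exact hv1
    have hsub2 : Concept.interp I' (Concept.ex (Role.inv s) Concept.top) ⊆
        Concept.interp I' (Concept.atom X) := by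
      rw [hax2] at hv2
      simp only [Axiom.vioCount, Set.encard_eq_zero, vioCI, Set.diff_eq_empty] at hv2
      exact hv2
    have hsub3 : Concept.interp I' (Concept.atom X) ⊆
        Concept.interp I' (Concept.ex (Role.name r) Concept.top) := by
      rw [hax3] at hv3
      simp only [Axiom.vioCount, Set.encard_eq_zero, vioCI, Set.diff_eq_empty] at hv3
      exact hv3
    obtain ⟨e, hae, hedom⟩ := hsub1 (show I'.indI a ∈ Concept.interp I' (Concept.atom X0)
      from hsat0)
    have heX : e ∈ I'.cI X := hsub2 ⟨I'.indI a, hae, hProper a⟩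
    obtain ⟨f, hef, hfdom⟩ := hsub3 heX
    have hfvio : f ∈ vioCI I' (Concept.ex (Role.inv r) Concept.top) (Concept.atom Xb) := by
      constructor
      · exact ⟨e, hef, I'.cI_sub X heX⟩
      · show f ∉ I'.cI Xb
        rw [hXbE]
        exact Set.notMem_empty f
    have hv4 : 1 ≤ Axiom.vioCount I' ax4 := by
      rw [hax4]
      rw [Axiom.vioCount]
      exact Set.one_le_encard_iff_nonempty.mpr ⟨f, hfvio⟩
    -- the cost over (T, A)
    have hTsum : ∑ τ ∈ T, (if τ = ax4 then (1 : ℕ∞) else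
        if τ = ax1 ∨ τ = ax2 ∨ τ = ax3 then ⊤ else wT τ) * Axiom.vioCount I' τ
        = ∑ τ ∈ T, wT τ * Axiom.vioCount I' τ := by
      refine Finset.sum_congr rfl fun τ hτ => ?_
      rw [if_neg (hne4 τ hτ), if_neg (by
        push_neg
        exact ⟨hne1 τ hτ, hne2 τ hτ, hne3 τ hτ⟩)]
    have hAsum : ∑ α ∈ A, (if Assertion.sat I' α then 0 else
        if α = Assertion.ca X0 a then ⊤ else wA α)
        = ∑ α ∈ A, (if Assertion.sat I' α then 0 else wA α) := by
      refine Finset.sum_congr rfl fun α hα => ?_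
      rw [if_neg (hneA α hα)]
    rw [hv1, hv2, hv3, if_pos hsat0, hTsum, hAsum] at hcost
    simp only [mul_zero, zero_add] at hcost
    refine ⟨U, I', hProper, ?_, (satQ_single_ca _ _).mpr ⟨e, heX⟩⟩
    rw [cost]
    have hfin : ∑ τ ∈ T, wT τ * Axiom.vioCount I' τ +
        ∑ α ∈ A, (if Assertion.sat I' α then 0 else wA α) + 1 ≤ (k : ℕ∞) + 1 := by
      calc ∑ τ ∈ T, wT τ * Axiom.vioCount I' τ +
            ∑ α ∈ A, (if Assertion.sat I' α then 0 else wA α) + 1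
          = 1 + ∑ τ ∈ T, wT τ * Axiom.vioCount I' τ +
            ∑ α ∈ A, (if Assertion.sat I' α then 0 else wA α) := by ring
        _ ≤ Axiom.vioCount I' ax4 + ∑ τ ∈ T, wT τ * Axiom.vioCount I' τ +
            ∑ α ∈ A, (if Assertion.sat I' α then 0 else wA α) := by gcongr
        _ ≤ ((k + 1 : ℕ) : ℕ∞) := hcost
        _ = (k : ℕ∞) + 1 := by push_cast; ring
    exact (ENat.add_le_add_iff_right ENat.one_ne_top).mp hfin


end DL
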